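/- Let p be a PMF on a finite alphabet Y and let p̂(n) be the empirical distribution of n i.i.d. samples from p. Then E[d_TV(p, p̂(n))] ≤ sqrt(2·ζ(p)·|Y| / n), where ζ(p) = 1 − ∑_{y∈Y} p(y)² and d_TV(p,q) = ∑_{y∈Y} |p(y) − q(y)|. -/

import Mathlib

open MeasureTheory Real

/-- Expected total-variation deviation of the empirical distribution:
`E[d_TV(p, p̂(n))] ≤ √(2·ζ(p)·|Y|/n)` where `ζ(p) = 1 − ∑_y p(y)²`. -/
theorem stmt_10 {Y : Type*} [Fintype Y] [DecidableEq Y] [MeasurableSpace Y]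
    [MeasurableSingletonClass Y] (p : PMF Y) (n : ℕ) (hn : 0 < n) :
    (∫ ω : Fin n → Y,
        (∑ y, |(p y).toReal - (∑ ℓ, if ω ℓ = y then (1 : ℝ) else 0) / n|)
        ∂(Measure.pi fun _ : Fin n => p.toMeasure))
      ≤ Real.sqrt (2 * (1 - ∑ y, ((p y).toReal) ^ 2) * (Fintype.card Y : ℝ) / n) := by
  classical
  set μ := Measure.pi fun _ : Fin n => p.toMeasure with hμ
  have hprob : IsProbabilityMeasure μ := inferInstance
  set a : Y → ℝ := fun y => (p y).toReal with ha
  have hsum_a : ∑ y, a y = 1 := by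
    have h1 := p.tsum_coe
    rw [tsum_fintype] at h1
    have h2 : ((∑ y, p y)).toReal = 1 := by rw [h1]; simp
    rwa [ENNReal.toReal_sum (fun y _ => p.apply_ne_top y)] at h2
  set P : (Fin n → Y) → ℝ := fun ω => ∏ ℓ, a (ω ℓ) with hP
  have hμsingle : ∀ ω : Fin n → Y, (μ {ω}).toReal = P ω := by
    intro ω
    rw [hμ, ← Set.univ_pi_singleton ω, Measure.pi_pi]
    rw [ENNReal.toReal_prod]
    refine Finset.prod_congr rfl fun ℓ _ => ?_
    rw [p.toMeasure_apply_singleton _ (measurableSet_singleton _)]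
  have hint : ∀ f : (Fin n → Y) → ℝ, ∫ ω, f ω ∂μ = ∑ ω, P ω * f ω := by
    intro f
    rw [integral_fintype (Integrable.of_finite)]
    exact Finset.sum_congr rfl fun ω _ => by rw [Measure.real, hμsingle, smul_eq_mul]
  have hkey : ∀ g : Fin n → Y → ℝ, ∑ ω : Fin n → Y, P ω * ∏ ℓ, g ℓ (ω ℓ)
      = ∏ ℓ, ∑ y, a y * g ℓ y := by
    intro g
    rw [Fintype.prod_sum (f := fun ℓ y => a y * g ℓ y)]
    exact Finset.sum_congr rfl fun ω _ => by rw [hP, ← Finset.prod_mul_distrib]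
  -- moments
  have hP1 : ∑ ω : Fin n → Y, P ω = 1 := by
    have := hkey (fun _ _ => 1)
    simpa [hsum_a] using this
  set χ : Y → Y → ℝ := fun y z => if z = y then 1 else 0 with hχ
  have hind : ∀ (y : Y) (s : Finset (Fin n)),
      ∑ ω : Fin n → Y, P ω * ∏ ℓ ∈ s, χ y (ω ℓ) = a y ^ s.card := by
    intro y s
    have h1 : ∀ ω : Fin n → Y, (∏ ℓ ∈ s, χ y (ω ℓ))
        = ∏ ℓ, (if ℓ ∈ s then χ y (ω ℓ) else 1) := by
      intro ω
      rw [Finset.prod_ite_mem, Finset.univ_inter]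
    have h2 : ∀ ℓ : Fin n, ∑ z, a z * (if ℓ ∈ s then χ y z else 1)
        = if ℓ ∈ s then a y else 1 := by
      intro ℓ
      by_cases h : ℓ ∈ s <;> simp [h, hχ, mul_ite, Finset.sum_ite_eq', hsum_a]
    calc ∑ ω : Fin n → Y, P ω * ∏ ℓ ∈ s, χ y (ω ℓ)
        = ∑ ω : Fin n → Y, P ω * ∏ ℓ, (if ℓ ∈ s then χ y (ω ℓ) else 1) := by
          simp_rw [h1]
      _ = ∏ ℓ, ∑ z, a z * (if ℓ ∈ s then χ y z else 1) :=
          hkey (fun ℓ z => if ℓ ∈ s then χ y z else 1)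
      _ = ∏ ℓ, (if ℓ ∈ s then a y else 1) := by simp_rw [h2]
      _ = a y ^ s.card := by
          rw [Finset.prod_ite_mem, Finset.univ_inter, Finset.prod_const]
  set S : (Fin n → Y) → Y → ℝ := fun ω y => ∑ ℓ, χ y (ω ℓ) with hS
  have hS1 : ∀ y, ∑ ω : Fin n → Y, P ω * S ω y = n * a y := by
    intro y
    calc ∑ ω : Fin n → Y, P ω * S ω y
        = ∑ ω : Fin n → Y, ∑ ℓ, P ω * χ y (ω ℓ) := by
          simp_rw [hS, Finset.mul_sum]
      _ = ∑ ℓ : Fin n, ∑ ω : Fin n → Y, P ω * χ y (ω ℓ) := Finset.sum_comm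
      _ = ∑ ℓ : Fin n, a y := by
          refine Finset.sum_congr rfl fun ℓ _ => ?_
          have := hind y {ℓ}
          simpa using this
      _ = n * a y := by simp [mul_comm]
  have hS2 : ∀ y, ∑ ω : Fin n → Y, P ω * (S ω y) ^ 2
      = n * a y + ((n : ℝ) ^ 2 - n) * a y ^ 2 := by
    intro y
    have hprodpair : ∀ (ℓ m : Fin n) (ω : Fin n → Y),
        χ y (ω ℓ) * χ y (ω m) = ∏ i ∈ ({ℓ, m} : Finset (Fin n)), χ y (ω i) := by
      intro ℓ m ω
      by_cases h : ℓ = m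
      · subst h
        by_cases h2 : ω ℓ = y <;> simp [hχ, h2]
      · rw [Finset.prod_pair h]
    have hpaircard : ∀ (ℓ m : Fin n),
        a y ^ ({ℓ, m} : Finset (Fin n)).card = if ℓ = m then a y else a y ^ 2 := by
      intro ℓ m
      by_cases h : ℓ = m
      · simp [h]
      · rw [Finset.card_pair h]; simp [h]
    calc ∑ ω : Fin n → Y, P ω * (S ω y) ^ 2
        = ∑ ω : Fin n → Y, ∑ ℓ : Fin n, ∑ m : Fin n, P ω * (χ y (ω ℓ) * χ y (ω m)) := by
          refine Finset.sum_congr rfl fun ω _ => ?_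
          rw [hS]
          simp_rw [sq, Finset.sum_mul_sum, Finset.mul_sum]
      _ = ∑ ℓ : Fin n, ∑ m : Fin n, ∑ ω : Fin n → Y, P ω * (χ y (ω ℓ) * χ y (ω m)) := by
          rw [Finset.sum_comm]
          exact Finset.sum_congr rfl fun ℓ _ => Finset.sum_comm
      _ = ∑ ℓ : Fin n, ∑ m : Fin n, (if ℓ = m then a y else a y ^ 2) := by
          refine Finset.sum_congr rfl fun ℓ _ => Finset.sum_congr rfl fun m _ => ?_
          rw [← hpaircard ℓ m, ← hind y {ℓ, m}]
          exact Finset.sum_congr rfl fun ω _ => by rw [hprodpair]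
      _ = ∑ _ℓ : Fin n, ((n : ℝ) * a y ^ 2 + (a y - a y ^ 2)) := by
          refine Finset.sum_congr rfl fun ℓ _ => ?_
          have : ∀ m : Fin n, (if ℓ = m then a y else a y ^ 2)
              = a y ^ 2 + (if ℓ = m then a y - a y ^ 2 else 0) := by
            intro m; by_cases h : ℓ = m <;> simp [h]
          simp_rw [this, Finset.sum_add_distrib, Finset.sum_const, Finset.card_univ,
            Fintype.card_fin, Finset.sum_ite_eq, Finset.mem_univ, if_true, nsmul_eq_mul]
      _ = n * a y + ((n : ℝ) ^ 2 - n) * a y ^ 2 := by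
          rw [Finset.sum_const, Finset.card_univ, Fintype.card_fin, nsmul_eq_mul]; ring
  have hn' : (n : ℝ) ≠ 0 := Nat.cast_ne_zero.mpr hn.ne'
  have ha0 : ∀ y, 0 ≤ a y := fun y => ENNReal.toReal_nonneg
  have ha1 : ∀ y, a y ≤ 1 := by
    intro y
    rw [← hsum_a]
    exact Finset.single_le_sum (fun z _ => ha0 z) (Finset.mem_univ y)
  have hP0 : ∀ ω : Fin n → Y, 0 ≤ P ω :=
    fun ω => Finset.prod_nonneg fun ℓ _ => ha0 (ω ℓ)
  have hVar : ∀ y, ∑ ω : Fin n → Y, P ω * (a y - S ω y / n) ^ 2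
      = a y * (1 - a y) / n := by
    intro y
    have hexp : ∀ ω : Fin n → Y, P ω * (a y - S ω y / n) ^ 2
        = a y ^ 2 * P ω - (2 * a y / n) * (P ω * S ω y)
          + (1 / (n : ℝ) ^ 2) * (P ω * (S ω y) ^ 2) := by
      intro ω; field_simp; ring
    calc ∑ ω : Fin n → Y, P ω * (a y - S ω y / n) ^ 2
        = a y ^ 2 * (∑ ω : Fin n → Y, P ω)
          - (2 * a y / n) * (∑ ω : Fin n → Y, P ω * S ω y)
          + (1 / (n : ℝ) ^ 2) * (∑ ω : Fin n → Y, P ω * (S ω y) ^ 2) := by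
          simp_rw [hexp, Finset.sum_add_distrib, Finset.sum_sub_distrib,
            ← Finset.mul_sum]
      _ = a y * (1 - a y) / n := by
          rw [hP1, hS1, hS2]; field_simp; ring
  have hCS1 : ∀ y, ∑ ω : Fin n → Y, P ω * |a y - S ω y / n|
      ≤ Real.sqrt (a y * (1 - a y) / n) := by
    intro y
    have hsq : (∑ ω : Fin n → Y, P ω * |a y - S ω y / n|) ^ 2
        ≤ (∑ ω : Fin n → Y, P ω) * ∑ ω : Fin n → Y, P ω * (a y - S ω y / n) ^ 2 := by
      refine Finset.sum_sq_le_sum_mul_sum_of_sq_eq_mul _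
        (fun ω _ => hP0 ω) (fun ω _ => mul_nonneg (hP0 ω) (sq_nonneg _))
        (fun ω _ => ?_)
      rw [mul_pow, sq_abs]; ring
    rw [hP1, one_mul, hVar] at hsq
    rw [Real.le_sqrt (Finset.sum_nonneg fun ω _ => mul_nonneg (hP0 ω) (abs_nonneg _))
      (div_nonneg (mul_nonneg (ha0 y) (sub_nonneg.mpr (ha1 y))) (Nat.cast_nonneg n))]
    exact hsq
  -- nonnegativity of ζ
  have hζ0 : 0 ≤ 1 - ∑ y, a y ^ 2 := by
    have hle : ∑ y, a y ^ 2 ≤ ∑ y, a y :=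
      Finset.sum_le_sum fun y _ => by nlinarith [ha0 y, ha1 y]
    rw [hsum_a] at hle
    linarith
  have hVsum : ∑ y, a y * (1 - a y) / n = (1 - ∑ y, a y ^ 2) / n := by
    rw [← Finset.sum_div]
    congr 1
    have h1 : ∀ y : Y, a y * (1 - a y) = a y - a y ^ 2 := fun y => by ring
    simp_rw [h1, Finset.sum_sub_distrib, hsum_a]
  have hCS2 : ∑ y, Real.sqrt (a y * (1 - a y) / n)
      ≤ Real.sqrt ((Fintype.card Y : ℝ) * ((1 - ∑ y, a y ^ 2) / n)) := by
    have hV0 : ∀ y : Y, 0 ≤ a y * (1 - a y) / n := fun y =>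
      div_nonneg (mul_nonneg (ha0 y) (sub_nonneg.mpr (ha1 y))) (Nat.cast_nonneg n)
    have hsq : (∑ y, Real.sqrt (a y * (1 - a y) / n)) ^ 2
        ≤ (∑ _y : Y, (1 : ℝ)) * ∑ y, a y * (1 - a y) / n := by
      refine Finset.sum_sq_le_sum_mul_sum_of_sq_eq_mul _
        (fun y _ => zero_le_one) (fun y _ => hV0 y) (fun y _ => ?_)
      rw [Real.sq_sqrt (hV0 y), one_mul]
    rw [Finset.sum_const, Finset.card_univ, nsmul_eq_mul, mul_one, hVsum] at hsq
    rw [Real.le_sqrt (Finset.sum_nonneg fun y _ => Real.sqrt_nonneg _)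
      (mul_nonneg (Nat.cast_nonneg _) (div_nonneg hζ0 (Nat.cast_nonneg n)))]
    exact hsq
  have hfinal : Real.sqrt ((Fintype.card Y : ℝ) * ((1 - ∑ y, a y ^ 2) / n))
      ≤ Real.sqrt (2 * (1 - ∑ y, a y ^ 2) * (Fintype.card Y : ℝ) / n) := by
    apply Real.sqrt_le_sqrt
    rw [mul_div_assoc', div_le_div_iff₀ (by positivity) (by positivity)]
    have hc0 : (0 : ℝ) ≤ (Fintype.card Y : ℝ) := Nat.cast_nonneg _
    nlinarith [mul_nonneg hc0 hζ0, (Nat.cast_pos.mpr hn : (0:ℝ) < n)]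
  calc (∫ ω : Fin n → Y,
          (∑ y, |(p y).toReal - (∑ ℓ, if ω ℓ = y then (1 : ℝ) else 0) / n|) ∂μ)
      = ∑ ω : Fin n → Y, P ω * ∑ y, |a y - S ω y / n| := hint _
    _ = ∑ y, ∑ ω : Fin n → Y, P ω * |a y - S ω y / n| := by
        simp_rw [Finset.mul_sum]; exact Finset.sum_comm
    _ ≤ ∑ y, Real.sqrt (a y * (1 - a y) / n) := Finset.sum_le_sum fun y _ => hCS1 y
    _ ≤ Real.sqrt ((Fintype.card Y : ℝ) * ((1 - ∑ y, a y ^ 2) / n)) := hCS2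
    _ ≤ Real.sqrt (2 * (1 - ∑ y, a y ^ 2) * (Fintype.card Y : ℝ) / n) := hfinal
    _ = Real.sqrt (2 * (1 - ∑ y, ((p y).toReal) ^ 2) * (Fintype.card Y : ℝ) / n) := rfl
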